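/- For all Boolean functions f on n bits, g on m bits, and p ∈ [0,1], with g(p) = P_{x∼π_p}[g(x)=1], the distributional algorithmic complexity is submultiplicative under composition: a(f∘g, π_p) ≤ a(f, π_{g(p)}) · a(g, π_p). -/

import Mathlib

open Classical

noncomputable section

/-- Flip the bits of `x` in the set `B`. -/
def flipOn {ι : Type*} [DecidableEq ι] (x : ι → Bool) (B : Finset ι) : ι → Bool :=
  fun i => if i ∈ B then !(x i) else x i

/-- Pointwise sensitivity of `f` at `x`. -/
def sensAt {ι : Type*} [Fintype ι] [DecidableEq ι] (f : (ι → Bool) → Bool)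
    (x : ι → Bool) : ℕ :=
  (Finset.univ.filter fun i => f (flipOn x {i}) ≠ f x).card

/-- Pointwise block sensitivity of `f` at `x`. -/
def bsAt {ι : Type*} [DecidableEq ι] (f : (ι → Bool) → Bool) (x : ι → Bool) : ℕ :=
  sSup {m | ∃ B : Fin m → Finset ι,
    (∀ j, f (flipOn x (B j)) ≠ f x) ∧ ∀ j k, j ≠ k → Disjoint (B j) (B k)}

/-- `W` is a witness set for `f` at `x`. -/
def IsWitness {ι : Type*} (f : (ι → Bool) → Bool) (x : ι → Bool) (W : Finset ι) : Prop :=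
  ∀ y, (∀ i ∈ W, y i = x i) → f y = f x

/-- Pointwise minimum witness size of `f` at `x`. -/
def witAt {ι : Type*} (f : (ι → Bool) → Bool) (x : ι → Bool) : ℕ :=
  sInf {k | ∃ W : Finset ι, W.card = k ∧ IsWitness f x W}

/-- Decision trees querying coordinates in `ι`. -/
inductive DTree (ι : Type*) where
  | leaf : DTree ι
  | node : ι → DTree ι → DTree ι → DTree ι

/-- The set of coordinates queried by the tree `T` on input `x`. -/
def DTree.path {ι : Type*} [DecidableEq ι] : DTree ι → (ι → Bool) → Finset ι
  | .leaf, _ => ∅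
  | .node i t0 t1, x => insert i (if x i then t1.path x else t0.path x)

/-- The tree `T` determines `f`: at each leaf the queried bits witness the value of `f`. -/
def DTree.Determines {ι : Type*} [DecidableEq ι] (T : DTree ι)
    (f : (ι → Bool) → Bool) : Prop :=
  ∀ x, IsWitness f x (T.path x)

/-- A partition of the hypercube into subcubes, encoded by the map sending each point to
the code (fixed coordinates) of its part. -/
structure SubcubePartition (ι : Type*) where
  code : (ι → Bool) → (ι → Option Bool)
  self_mem : ∀ x i b, code x i = some b → x i = b
  compat : ∀ x y, (∀ i b, code x i = some b → y i = b) → code y = code x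

/-- Number of coordinates fixed by the subcube containing `x`. -/
def SubcubePartition.codim {ι : Type*} [Fintype ι] (P : SubcubePartition ι)
    (x : ι → Bool) : ℕ :=
  (Finset.univ.filter fun i => (P.code x i).isSome).card

/-- The partition determines `f`, i.e. `f` is constant on each part. -/
def SubcubePartition.Determines {ι : Type*} (P : SubcubePartition ι)
    (f : (ι → Bool) → Bool) : Prop :=
  ∀ x y, (∀ i b, P.code x i = some b → y i = b) → f y = f x

/-- Deterministic sensitivity. -/
def detSens {ι : Type*} [Fintype ι] [DecidableEq ι] (f : (ι → Bool) → Bool) : ℕ :=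
  Finset.univ.sup fun x => sensAt f x

/-- Deterministic block sensitivity. -/
def detBS {ι : Type*} [Fintype ι] [DecidableEq ι] (f : (ι → Bool) → Bool) : ℕ :=
  Finset.univ.sup fun x => bsAt f x

/-- Deterministic witness complexity. -/
def detWit {ι : Type*} [Fintype ι] [DecidableEq ι] (f : (ι → Bool) → Bool) : ℕ :=
  Finset.univ.sup fun x => witAt f x

/-- Deterministic subcube partition complexity. -/
def detSC {ι : Type*} [Fintype ι] (f : (ι → Bool) → Bool) : ℕ :=
  sInf {k | ∃ P : SubcubePartition ι, P.Determines f ∧ ∀ x, P.codim x ≤ k}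

/-- Deterministic algorithmic (decision tree) complexity. -/
def detAlg {ι : Type*} [Fintype ι] [DecidableEq ι] (f : (ι → Bool) → Bool) : ℕ :=
  sInf {k | ∃ T : DTree ι, T.Determines f ∧ ∀ x, (T.path x).card ≤ k}

/-- Weight of the configuration `x` under the product Bernoulli(p) measure `π_p`. -/
def wt {ι : Type*} [Fintype ι] (p : ℝ) (x : ι → Bool) : ℝ :=
  ∏ i, (if x i then p else 1 - p)

/-- Expectation under `π_p`. -/
def expec {ι : Type*} [Fintype ι] [DecidableEq ι] (p : ℝ) (g : (ι → Bool) → ℝ) : ℝ :=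
  ∑ x, wt p x * g x

/-- Distributional sensitivity. -/
def distSens {ι : Type*} [Fintype ι] [DecidableEq ι] (f : (ι → Bool) → Bool) (p : ℝ) : ℝ :=
  expec p fun x => (sensAt f x : ℝ)

/-- Distributional block sensitivity. -/
def distBS {ι : Type*} [Fintype ι] [DecidableEq ι] (f : (ι → Bool) → Bool) (p : ℝ) : ℝ :=
  expec p fun x => (bsAt f x : ℝ)

/-- Distributional witness complexity. -/
def distWit {ι : Type*} [Fintype ι] [DecidableEq ι] (f : (ι → Bool) → Bool) (p : ℝ) : ℝ :=
  expec p fun x => (witAt f x : ℝ)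

/-- Distributional subcube partition complexity. -/
def distSC {ι : Type*} [Fintype ι] [DecidableEq ι] (f : (ι → Bool) → Bool) (p : ℝ) : ℝ :=
  sInf {c | ∃ P : SubcubePartition ι, P.Determines f ∧
    c = expec p fun x => (P.codim x : ℝ)}

/-- Distributional algorithmic complexity. -/
def distAlg {ι : Type*} [Fintype ι] [DecidableEq ι] (f : (ι → Bool) → Bool) (p : ℝ) : ℝ :=
  sInf {c | ∃ T : DTree ι, T.Determines f ∧
    c = expec p fun x => ((T.path x).card : ℝ)}

/-- `μ x J` is the joint probability that the bits equal `x` and the random set equals `J`;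
the conditions say: the marginal of the bits is `π_p`, the random set is a.s. a witness set
for `f`, and the random set is local (conditionally on `{I = J}` and the bits on `J`, the
bits outside `J` are still i.i.d. Bernoulli(p)). -/
def IsLocalWitnessSystem {ι : Type*} [Fintype ι] [DecidableEq ι]
    (f : (ι → Bool) → Bool) (p : ℝ) (μ : (ι → Bool) → Finset ι → ℝ) : Prop :=
  (∀ x J, 0 ≤ μ x J) ∧
  (∀ x, ∑ J, μ x J = wt p x) ∧
  (∀ x J, μ x J ≠ 0 → IsWitness f x J) ∧
  (∀ (J : Finset ι) x y, (∀ i ∈ J, x i = y i) → μ x J * wt p y = μ y J * wt p x)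

/-- Distributional local witness complexity. -/
def distLocal {ι : Type*} [Fintype ι] [DecidableEq ι]
    (f : (ι → Bool) → Bool) (p : ℝ) : ℝ :=
  sInf {c | ∃ μ : (ι → Bool) → Finset ι → ℝ, IsLocalWitnessSystem f p μ ∧
    c = ∑ x, ∑ J, μ x J * (J.card : ℝ)}

/-- The composition `f ∘ g` of Boolean functions, on `n · m` bits. -/
def bcomp {n m : ℕ} (f : (Fin n → Bool) → Bool) (g : (Fin m → Bool) → Bool) :
    (Fin n × Fin m → Bool) → Bool :=
  fun x => f fun i => g fun j => x (i, j)

/-- `P_{x ∼ π_p}[g(x) = 1]`. -/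
def probOne {ι : Type*} [Fintype ι] [DecidableEq ι] (g : (ι → Bool) → Bool) (p : ℝ) : ℝ :=
  ∑ x, wt p x * (if g x then 1 else 0)


namespace DAC
open Finset

/-! ### Basic weight facts -/

lemma wt_nonneg {ι : Type*} [Fintype ι] {p : ℝ} (hp0 : 0 ≤ p) (hp1 : p ≤ 1)
    (x : ι → Bool) : 0 ≤ wt p x := by
  apply Finset.prod_nonneg
  intro i _
  by_cases h : x i <;> simp [h] <;> linarith

/-- Sum–product factorization over function spaces on `Fin k`. -/
lemma sum_prod_pi (k : ℕ) {α : Type*} [Fintype α] (u : Fin k → α → ℝ) :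
    ∑ X : Fin k → α, ∏ j, u j (X j) = ∏ j, ∑ a, u j a := by
  induction k with
  | zero =>
    simp
  | succ k ih =>
    rw [← (Fin.consEquiv (fun _ : Fin (k+1) => α)).sum_comp, Fintype.sum_prod_type]
    have hterm : ∀ (a : α) (X : Fin k → α),
        ∏ j, u j (((Fin.consEquiv (fun _ : Fin (k+1) => α)) (a, X)) j)
          = u 0 a * ∏ j, u j.succ (X j) := by
      intro a X
      rw [Fin.prod_univ_succ]
      rfl
    simp only [hterm]
    rw [Fin.prod_univ_succ, ← ih (fun j a => u j.succ a)]
    rw [← Finset.sum_mul_sum]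

lemma sum_wt_one (k : ℕ) {p : ℝ} :
    ∑ y : Fin k → Bool, wt p y = 1 := by
  have h := sum_prod_pi k (α := Bool) (fun _ b => if b then p else 1 - p)
  have : ∀ y : Fin k → Bool, wt p y = ∏ j, (if y j then p else 1 - p) := fun y => rfl
  simp only [this, h]
  have : (∑ a : Bool, if a = true then p else 1 - p) = 1 := by
    rw [Fintype.sum_bool]; norm_num
  rw [this, Finset.prod_const_one]

lemma probOne_nonneg {k : ℕ} (g : (Fin k → Bool) → Bool) {p : ℝ}
    (hp0 : 0 ≤ p) (hp1 : p ≤ 1) : 0 ≤ probOne g p := by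
  apply Finset.sum_nonneg
  intro y _
  apply mul_nonneg (wt_nonneg hp0 hp1 y)
  by_cases h : g y <;> simp [h]

lemma probOne_le_one {k : ℕ} (g : (Fin k → Bool) → Bool) {p : ℝ}
    (hp0 : 0 ≤ p) (hp1 : p ≤ 1) : probOne g p ≤ 1 := by
  calc probOne g p ≤ ∑ y : Fin k → Bool, wt p y := by
        apply Finset.sum_le_sum
        intro y _
        have := wt_nonneg hp0 hp1 (ι := Fin k) y
        by_cases h : g y <;> simp [h] <;> linarith
    _ = 1 := sum_wt_one k

/-! ### The full tree (nonemptiness) -/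

def fullTree {ι : Type*} : List ι → DTree ι
  | [] => .leaf
  | i :: l => .node i (fullTree l) (fullTree l)

lemma fullTree_path {ι : Type*} [DecidableEq ι] (l : List ι) (x : ι → Bool) :
    (fullTree l).path x = l.toFinset := by
  induction l with
  | nil => rfl
  | cons i l ih => cases h : x i <;> simp [fullTree, DTree.path, h, ih]

lemma fullTree_determines {ι : Type*} [Fintype ι] [DecidableEq ι]
    (f : (ι → Bool) → Bool) : (fullTree (Finset.univ.toList (α := ι))).Determines f := by
  intro x y hy
  have : y = x := by
    funext i
    exact hy i (by rw [fullTree_path]; simp)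
  rw [this]

/-! ### Composition of trees -/

variable {n m : ℕ}

def graft (i : Fin n) : DTree (Fin m) → (Fin m → Bool) →
    ((Fin m → Bool) → DTree (Fin n × Fin m)) → DTree (Fin n × Fin m)
  | .leaf, y, k => k y
  | .node j t0 t1, y, k =>
      .node (i, j) (graft i t0 (Function.update y j false) k)
                   (graft i t1 (Function.update y j true) k)

def compT (g : (Fin m → Bool) → Bool) (Tg : DTree (Fin m)) :
    DTree (Fin n) → DTree (Fin n × Fin m)
  | .leaf => .leaf
  | .node i t0 t1 => graft i Tg (fun _ => false)
      (fun y => if g y then compT g Tg t1 else compT g Tg t0)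

lemma graft_path (i : Fin n) (Tg : DTree (Fin m)) :
    ∀ (y : Fin m → Bool) (k : (Fin m → Bool) → DTree (Fin n × Fin m))
      (x : Fin n × Fin m → Bool),
    (graft i Tg y k).path x
      = ((Tg.path fun j => x (i, j)).image fun j => (i, j)) ∪
        (k (fun j => if j ∈ Tg.path (fun j' => x (i, j')) then x (i, j) else y j)).path x := by
  induction Tg with
  | leaf =>
    intro y k x
    simp [graft, DTree.path]
  | node j t0 t1 ih0 ih1 =>
    intro y k x
    cases hb : x (i, j) with
    | true =>
      have : (graft i (.node j t0 t1) y k).path x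
          = insert (i, j) ((graft i t1 (Function.update y j true) k).path x) := by
        simp [graft, DTree.path, hb]
      rw [this, ih1]
      have hpath : (DTree.node j t0 t1).path (fun j' => x (i, j'))
          = insert j (t1.path fun j' => x (i, j')) := by
        simp [DTree.path, hb]
      have hfun : (fun j1 => if j1 ∈ t1.path (fun j' => x (i, j')) then x (i, j1)
            else Function.update y j true j1)
          = (fun j1 => if j1 ∈ insert j (t1.path fun j' => x (i, j')) then x (i, j1)
            else y j1) := by
        funext j1
        by_cases hj : j1 = j
        · subst hj; simp [hb]
        · simp [hj, Function.update_of_ne hj]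
      rw [hpath, Finset.image_insert, Finset.insert_union, hfun]
    | false =>
      have : (graft i (.node j t0 t1) y k).path x
          = insert (i, j) ((graft i t0 (Function.update y j false) k).path x) := by
        simp [graft, DTree.path, hb]
      rw [this, ih0]
      have hpath : (DTree.node j t0 t1).path (fun j' => x (i, j'))
          = insert j (t0.path fun j' => x (i, j')) := by
        simp [DTree.path, hb]
      have hfun : (fun j1 => if j1 ∈ t0.path (fun j' => x (i, j')) then x (i, j1)
            else Function.update y j false j1)
          = (fun j1 => if j1 ∈ insert j (t0.path fun j' => x (i, j')) then x (i, j1)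
            else y j1) := by
        funext j1
        by_cases hj : j1 = j
        · subst hj; simp [hb]
        · simp [hj, Function.update_of_ne hj]
      rw [hpath, Finset.image_insert, Finset.insert_union, hfun]

lemma compT_path {g : (Fin m → Bool) → Bool} (Tg : DTree (Fin m))
    (hTg : Tg.Determines g) (Tf : DTree (Fin n)) (x : Fin n × Fin m → Bool) :
    (compT g Tg Tf).path x
      = ((Tf.path fun i => g fun j => x (i, j)).biUnion
          fun i => (Tg.path fun j => x (i, j)).image fun j => (i, j)) := by
  induction Tf with
  | leaf => simp [compT, DTree.path]
  | node i t0 t1 ih0 ih1 =>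
    have hcomp : compT g Tg (.node i t0 t1) = graft i Tg (fun _ => false)
        (fun y => if g y then compT g Tg t1 else compT g Tg t0) := rfl
    rw [hcomp, graft_path]
    have hg : g (fun j => if j ∈ Tg.path (fun j' => x (i, j')) then x (i, j) else false)
        = g (fun j => x (i, j)) := by
      apply hTg (fun j => x (i, j))
      intro j hj
      simp [hj]
    have hpathf : (DTree.node i t0 t1).path (fun i' => g fun j => x (i', j))
        = insert i ((if g (fun j => x (i, j)) then t1 else t0).path
            (fun i' => g fun j => x (i', j))) := by
      cases hgb : g (fun j => x (i, j)) <;> simp [DTree.path, hgb]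
    rw [hpathf, Finset.biUnion_insert]
    cases hgb : g (fun j => x (i, j)) with
    | true => rw [hg, hgb, if_pos rfl]; simp [ih1]
    | false => rw [hg, hgb, if_neg Bool.false_ne_true]; simp [ih0]

lemma compT_determines (f : (Fin n → Bool) → Bool) (g : (Fin m → Bool) → Bool)
    (Tf : DTree (Fin n)) (Tg : DTree (Fin m))
    (hTf : Tf.Determines f) (hTg : Tg.Determines g) :
    (compT g Tg Tf).Determines (bcomp f g) := by
  intro x y hy
  rw [compT_path Tg hTg] at hy
  show bcomp f g y = bcomp f g x
  unfold bcomp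
  apply hTf (fun i => g fun j => x (i, j))
  intro i hi
  apply hTg (fun j => x (i, j))
  intro j hj
  exact hy (i, j) (Finset.mem_biUnion.2 ⟨i, hi, Finset.mem_image.2 ⟨j, hj, rfl⟩⟩)

lemma compT_card {g : (Fin m → Bool) → Bool} (Tg : DTree (Fin m))
    (hTg : Tg.Determines g) (Tf : DTree (Fin n)) (x : Fin n × Fin m → Bool) :
    ((compT g Tg Tf).path x).card
      = ∑ i ∈ (Tf.path fun i => g fun j => x (i, j)),
          ((Tg.path fun j => x (i, j)).card) := by
  rw [compT_path Tg hTg, Finset.card_biUnion]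
  · exact Finset.sum_congr rfl fun i _ =>
      Finset.card_image_of_injective _ (fun a b h => by simpa using h)
  · intro a _ b _ hab
    simp only [Finset.disjoint_left]
    intro c hc hc'
    obtain ⟨j1, _, rfl⟩ := Finset.mem_image.1 hc
    obtain ⟨j2, _, h2⟩ := Finset.mem_image.1 hc'
    exact hab (show a = b from (congrArg Prod.fst h2).symm)

/-! ### path membership independence -/

lemma mem_path_update {k : ℕ} (T : DTree (Fin k)) (i : Fin k) (z : Fin k → Bool) (b : Bool) :
    i ∈ T.path (Function.update z i b) ↔ i ∈ T.path z := by
  induction T with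
  | leaf => exact Iff.rfl
  | node j t0 t1 ih0 ih1 =>
    by_cases hj : j = i
    · subst hj; simp [DTree.path]
    · have hz : Function.update z i b j = z j := Function.update_of_ne hj _ _
      simp only [DTree.path, Finset.mem_insert, hz]
      cases hzj : z j <;> simp [ih0, ih1]

/-! ### the pairing argument -/

lemma pair_sum (q : ℝ) (Tf : DTree (Fin n)) (i : Fin n) (E : Bool → ℝ) :
    2 * (∑ z : Fin n → Bool, (if i ∈ Tf.path z then (1:ℝ) else 0) *
          (E (z i) * ∏ j ∈ Finset.univ.erase i, (if z j then q else 1 - q)))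
      = (E true + E false) * ∑ z : Fin n → Bool, (if i ∈ Tf.path z then (1:ℝ) else 0) *
          ∏ j ∈ Finset.univ.erase i, (if z j then q else 1 - q) := by
  classical
  set σ : (Fin n → Bool) → (Fin n → Bool) := fun z => Function.update z i (!(z i)) with hσ
  have hinv : Function.Involutive σ := by
    intro z; funext j
    by_cases hji : j = i
    · subst hji; simp [hσ]
    · simp [hσ, Function.update_of_ne hji]
  have hsum_comp : ∀ h : (Fin n → Bool) → ℝ, ∑ z, h (σ z) = ∑ z, h z := by
    intro h
    exact Equiv.sum_comp (hinv.toPerm σ) h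
  have hF : ∀ z, (if i ∈ Tf.path (σ z) then (1:ℝ) else 0)
      = (if i ∈ Tf.path z then (1:ℝ) else 0) := by
    intro z
    exact if_congr (mem_path_update Tf i z (!(z i))) rfl rfl
  have hPi : ∀ z, (∏ j ∈ Finset.univ.erase i, (if (σ z) j then q else 1 - q))
      = ∏ j ∈ Finset.univ.erase i, (if z j then q else 1 - q) := by
    intro z
    apply Finset.prod_congr rfl
    intro j hj
    rw [show σ z j = z j from Function.update_of_ne (Finset.mem_erase.1 hj).1 _ _]
  have hσi : ∀ z, σ z i = !(z i) := fun z => Function.update_self _ _ _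
  have h1 : ∑ z, (if i ∈ Tf.path z then (1:ℝ) else 0) *
        (E (z i) * ∏ j ∈ Finset.univ.erase i, (if z j then q else 1 - q))
      = ∑ z, (if i ∈ Tf.path (σ z) then (1:ℝ) else 0) *
        (E (σ z i) * ∏ j ∈ Finset.univ.erase i, (if σ z j then q else 1 - q)) :=
    (hsum_comp _).symm
  calc 2 * (∑ z : Fin n → Bool, (if i ∈ Tf.path z then (1:ℝ) else 0) *
          (E (z i) * ∏ j ∈ Finset.univ.erase i, (if z j then q else 1 - q)))
      = (∑ z : Fin n → Bool, (if i ∈ Tf.path z then (1:ℝ) else 0) *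
          (E (z i) * ∏ j ∈ Finset.univ.erase i, (if z j then q else 1 - q)))
        + ∑ z, (if i ∈ Tf.path (σ z) then (1:ℝ) else 0) *
          (E (σ z i) * ∏ j ∈ Finset.univ.erase i, (if σ z j then q else 1 - q)) := by
        rw [← h1]; ring
    _ = ∑ z, ((if i ∈ Tf.path z then (1:ℝ) else 0) *
          (E (z i) * ∏ j ∈ Finset.univ.erase i, (if z j then q else 1 - q))
        + (if i ∈ Tf.path z then (1:ℝ) else 0) *
          (E (!(z i)) * ∏ j ∈ Finset.univ.erase i, (if z j then q else 1 - q))) := by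
        rw [← Finset.sum_add_distrib]
        apply Finset.sum_congr rfl
        intro z _
        rw [hF z, hPi z, hσi z]
    _ = (E true + E false) * ∑ z : Fin n → Bool, (if i ∈ Tf.path z then (1:ℝ) else 0) *
          ∏ j ∈ Finset.univ.erase i, (if z j then q else 1 - q) := by
        rw [Finset.mul_sum]
        apply Finset.sum_congr rfl
        intro z _
        cases hzi : z i <;> simp only [hzi, Bool.not_false, Bool.not_true] <;> ring

/-! ### the main term computation -/

lemma term_eq {p : ℝ} (g : (Fin m → Bool) → Bool) (Tf : DTree (Fin n)) (i : Fin n)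
    (c : (Fin m → Bool) → ℝ) :
    ∑ X : Fin n → Fin m → Bool, (∏ j, wt p (X j)) *
        ((if i ∈ Tf.path (fun i' => g (X i')) then (1:ℝ) else 0) * c (X i))
      = (∑ z : Fin n → Bool, wt (probOne g p) z * (if i ∈ Tf.path z then 1 else 0))
        * (∑ y : Fin m → Bool, wt p y * c y) := by
  classical
  set q := probOne g p with hq
  set D : Bool → ℝ := fun b => ∑ y : Fin m → Bool, wt p y *
      ((if g y = b then (1:ℝ) else 0) * c y) with hD
  -- Step 1: resolution of the identity over z
  have step1 : ∀ X : Fin n → Fin m → Bool,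
      (∏ j, wt p (X j)) * ((if i ∈ Tf.path (fun i' => g (X i')) then (1:ℝ) else 0) * c (X i))
        = ∑ z : Fin n → Bool, (if i ∈ Tf.path z then (1:ℝ) else 0) *
            ∏ j, (wt p (X j) * ((if g (X j) = z j then (1:ℝ) else 0) *
              (if j = i then c (X j) else 1))) := by
    intro X
    have hprod : ∀ z : Fin n → Bool,
        (∏ j, (wt p (X j) * ((if g (X j) = z j then (1:ℝ) else 0) *
            (if j = i then c (X j) else 1))))
          = (if z = (fun i' => g (X i')) then (1:ℝ) else 0) *
              ((∏ j, wt p (X j)) * c (X i)) := by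
      intro z
      by_cases hz : z = fun i' => g (X i')
      · rw [if_pos hz]
        rw [Finset.prod_mul_distrib, Finset.prod_mul_distrib]
        have h1 : (∏ j, (if g (X j) = z j then (1:ℝ) else 0)) = 1 := by
          apply Finset.prod_eq_one
          intro j _
          rw [hz]
          simp
        have h2 : (∏ j, (if j = i then c (X j) else 1)) = c (X i) := by
          rw [Finset.prod_ite_eq' Finset.univ i (fun j => c (X j))]
          simp
        rw [h1, h2]
        ring
      · rw [if_neg hz]
        have hex : ∃ j, ¬ (g (X j) = z j) := by
          by_contra hcon
          push_neg at hcon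
          apply hz
          funext j
          exact (hcon j).symm
        obtain ⟨j, hj⟩ := hex
        rw [Finset.prod_eq_zero (Finset.mem_univ j)]
        · ring
        · simp [hj]
    symm
    calc ∑ z : Fin n → Bool, (if i ∈ Tf.path z then (1:ℝ) else 0) *
            ∏ j, (wt p (X j) * ((if g (X j) = z j then (1:ℝ) else 0) *
              (if j = i then c (X j) else 1)))
        = ∑ z : Fin n → Bool, (if z = (fun i' => g (X i')) then
            (if i ∈ Tf.path z then (1:ℝ) else 0) * ((∏ j, wt p (X j)) * c (X i)) else 0) := by
          apply Finset.sum_congr rfl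
          intro z _
          rw [hprod z]
          by_cases h : z = fun i' => g (X i') <;> simp [h]
      _ = (if i ∈ Tf.path (fun i' => g (X i')) then (1:ℝ) else 0) *
            ((∏ j, wt p (X j)) * c (X i)) := by
          rw [Finset.sum_ite_eq' Finset.univ (fun i' => g (X i'))
            (fun z => (if i ∈ Tf.path z then (1:ℝ) else 0) * ((∏ j, wt p (X j)) * c (X i)))]
          simp
      _ = (∏ j, wt p (X j)) * ((if i ∈ Tf.path (fun i' => g (X i')) then (1:ℝ) else 0)
            * c (X i)) := by ring
  rw [Finset.sum_congr rfl (fun X _ => step1 X), Finset.sum_comm]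
  -- Step 2: factor each z-term via the product formula
  have step2 : ∀ z : Fin n → Bool,
      (∑ X : Fin n → Fin m → Bool, (if i ∈ Tf.path z then (1:ℝ) else 0) *
          ∏ j, (wt p (X j) * ((if g (X j) = z j then (1:ℝ) else 0) *
            (if j = i then c (X j) else 1))))
        = (if i ∈ Tf.path z then (1:ℝ) else 0) *
            (D (z i) * ∏ j ∈ Finset.univ.erase i, (if z j then q else 1 - q)) := by
    intro z
    rw [← Finset.mul_sum]
    congr 1
    rw [sum_prod_pi n (fun j y => wt p y * ((if g y = z j then (1:ℝ) else 0) *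
      (if j = i then c y else 1)))]
    rw [← Finset.mul_prod_erase Finset.univ _ (Finset.mem_univ i)]
    congr 1
    · simp [hD]
    · apply Finset.prod_congr rfl
      intro j hj
      have hji : j ≠ i := (Finset.mem_erase.1 hj).1
      simp only [if_neg hji, mul_one]
      cases hzj : z j with
      | false =>
        have hsplit : ∀ y : Fin m → Bool, wt p y * (if g y = false then (1:ℝ) else 0)
            = wt p y - wt p y * (if g y then (1:ℝ) else 0) := by
          intro y
          cases hgy : g y <;> simp [hgy]
        simp only [hsplit]
        rw [Finset.sum_sub_distrib, sum_wt_one]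
        simp [hq, probOne]
      | true =>
        simp only [if_true]
        simp [hq, probOne]
  rw [Finset.sum_congr rfl (fun z _ => step2 z)]
  -- Step 3: pairing
  have h1 := pair_sum q Tf i D
  have h2 := pair_sum q Tf i (fun b => if b then q else 1 - q)
  simp only [eq_self_iff_true, if_true, Bool.false_eq_true, if_false] at h2
  have hDsum : D true + D false = ∑ y : Fin m → Bool, wt p y * c y := by
    rw [hD]
    rw [← Finset.sum_add_distrib]
    apply Finset.sum_congr rfl
    intro y _
    cases hgy : g y <;> simp [hgy]
  have hwt : ∀ z : Fin n → Bool, wt q z * (if i ∈ Tf.path z then (1:ℝ) else 0)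
      = (if i ∈ Tf.path z then (1:ℝ) else 0) *
          ((if z i then q else 1 - q) * ∏ j ∈ Finset.univ.erase i, (if z j then q else 1 - q)) := by
    intro z
    have : wt q z = (if z i then q else 1 - q) *
        ∏ j ∈ Finset.univ.erase i, (if z j then q else 1 - q) :=
      (Finset.mul_prod_erase Finset.univ _ (Finset.mem_univ i)).symm
    rw [this]
    ring
  rw [Finset.sum_congr rfl (fun z _ => hwt z), ← hDsum]
  linear_combination h1 / 2 - ((D true + D false) / 2) * h2

/-! ### full cost identity -/

lemma cost_eq {p : ℝ} (g : (Fin m → Bool) → Bool)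
    (Tf : DTree (Fin n)) (Tg : DTree (Fin m)) (hTg : Tg.Determines g) :
    expec p (fun x : Fin n × Fin m → Bool => (((compT g Tg Tf).path x).card : ℝ))
      = expec (probOne g p) (fun z => ((Tf.path z).card : ℝ))
        * expec p (fun y => ((Tg.path y).card : ℝ)) := by
  classical
  unfold expec
  rw [← Equiv.sum_comp (Equiv.curry (Fin n) (Fin m) Bool).symm
      (fun x => wt p x * (((compT g Tg Tf).path x).card : ℝ))]
  have hterm : ∀ X : Fin n → Fin m → Bool,
      wt p ((Equiv.curry (Fin n) (Fin m) Bool).symm X) *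
        (((compT g Tg Tf).path ((Equiv.curry (Fin n) (Fin m) Bool).symm X)).card : ℝ)
      = ∑ i : Fin n, (∏ j, wt p (X j)) *
          ((if i ∈ Tf.path (fun i' => g (X i')) then (1:ℝ) else 0) *
            ((Tg.path (X i)).card : ℝ)) := by
    intro X
    have hcard := compT_card Tg hTg Tf ((Equiv.curry (Fin n) (Fin m) Bool).symm X)
    have hw : wt p ((Equiv.curry (Fin n) (Fin m) Bool).symm X) = ∏ i, wt p (X i) := by
      show (∏ pr : Fin n × Fin m, (if X pr.1 pr.2 then p else 1 - p)) = _
      rw [Fintype.prod_prod_type]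
      rfl
    rw [hcard, hw]
    have hblk : ∀ i : Fin n, (fun j => (Equiv.curry (Fin n) (Fin m) Bool).symm X (i, j)) = X i :=
      fun i => rfl
    simp only [hblk]
    push_cast
    rw [← Finset.univ_inter (Tf.path (fun i' => g (X i'))), ← Finset.sum_ite_mem]
    rw [Finset.mul_sum]
    apply Finset.sum_congr rfl
    intro i _
    by_cases h : i ∈ Tf.path (fun i' => g (X i')) <;> simp [h]
  rw [Finset.sum_congr rfl (fun X _ => hterm X), Finset.sum_comm]
  rw [Finset.sum_congr rfl (fun i _ => term_eq g Tf i (fun y => ((Tg.path y).card : ℝ)))]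
  rw [← Finset.sum_mul]
  congr 1
  rw [Finset.sum_comm]
  apply Finset.sum_congr rfl
  intro z _
  rw [← Finset.mul_sum]
  congr 1
  rw [Finset.sum_boole]
  rw [Finset.filter_mem_eq_inter, Finset.univ_inter]

/-! ### sInf helpers -/

lemma le_mul_csInf {s : Set ℝ} (hs : s.Nonempty) {c x : ℝ} (hc : 0 ≤ c)
    (h : ∀ a ∈ s, x ≤ c * a) : x ≤ c * sInf s := by
  rcases hc.eq_or_lt with rfl | hc'
  · obtain ⟨a, ha⟩ := hs
    simpa using h a ha
  · have hls : x / c ≤ sInf s :=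
      le_csInf hs fun a ha => (div_le_iff₀' hc').2 (h a ha)
    exact (div_le_iff₀' hc').1 hls

lemma expec_nonneg {ι : Type*} [Fintype ι] [DecidableEq ι] {p : ℝ}
    (hp0 : 0 ≤ p) (hp1 : p ≤ 1) (h : (ι → Bool) → ℝ) (hh : ∀ y, 0 ≤ h y) :
    0 ≤ expec p h :=
  Finset.sum_nonneg fun y _ => mul_nonneg (wt_nonneg hp0 hp1 y) (hh y)


end DAC

/-- distributional algorithmic complexity is submultiplicative under
composition: `a(f∘g, π_p) ≤ a(f, π_{g(p)}) · a(g, π_p)`. -/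
theorem distAlg_comp (n m : ℕ) (f : (Fin n → Bool) → Bool) (g : (Fin m → Bool) → Bool)
    (p : ℝ) (hp0 : 0 ≤ p) (hp1 : p ≤ 1) :
    distAlg (bcomp f g) p ≤ distAlg f (probOne g p) * distAlg g p := by
  classical
  have hq0 : 0 ≤ probOne g p := DAC.probOne_nonneg g hp0 hp1
  have hq1 : probOne g p ≤ 1 := DAC.probOne_le_one g hp0 hp1
  have hlbg : ∀ c ∈ {c : ℝ | ∃ T : DTree (Fin m), T.Determines g ∧
      c = expec p fun x => ((T.path x).card : ℝ)}, (0:ℝ) ≤ c := by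
    rintro c ⟨T, -, rfl⟩
    exact DAC.expec_nonneg hp0 hp1 _ fun y => by positivity
  have hlbf : ∀ c ∈ {c : ℝ | ∃ T : DTree (Fin n), T.Determines f ∧
      c = expec (probOne g p) fun x => ((T.path x).card : ℝ)}, (0:ℝ) ≤ c := by
    rintro c ⟨T, -, rfl⟩
    exact DAC.expec_nonneg hq0 hq1 _ fun y => by positivity
  have hlbfg : ∀ c ∈ {c : ℝ | ∃ T : DTree (Fin n × Fin m), T.Determines (bcomp f g) ∧
      c = expec p fun x => ((T.path x).card : ℝ)}, (0:ℝ) ≤ c := by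
    rintro c ⟨T, -, rfl⟩
    exact DAC.expec_nonneg hp0 hp1 _ fun y => by positivity
  have hg_ne : {c : ℝ | ∃ T : DTree (Fin m), T.Determines g ∧
      c = expec p fun x => ((T.path x).card : ℝ)}.Nonempty :=
    ⟨_, DAC.fullTree _, DAC.fullTree_determines g, rfl⟩
  have hf_ne : {c : ℝ | ∃ T : DTree (Fin n), T.Determines f ∧
      c = expec (probOne g p) fun x => ((T.path x).card : ℝ)}.Nonempty :=
    ⟨_, DAC.fullTree _, DAC.fullTree_determines f, rfl⟩
  have key : ∀ a ∈ {c : ℝ | ∃ T : DTree (Fin n), T.Determines f ∧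
      c = expec (probOne g p) fun x => ((T.path x).card : ℝ)},
      ∀ b ∈ {c : ℝ | ∃ T : DTree (Fin m), T.Determines g ∧
      c = expec p fun x => ((T.path x).card : ℝ)},
      distAlg (bcomp f g) p ≤ a * b := by
    rintro a ⟨Tf, hTf, rfl⟩ b ⟨Tg, hTg, rfl⟩
    rw [← DAC.cost_eq g Tf Tg hTg]
    exact csInf_le ⟨0, hlbfg⟩
      ⟨DAC.compT g Tg Tf, DAC.compT_determines f g Tf Tg hTf hTg, rfl⟩
  have step1 : ∀ a ∈ {c : ℝ | ∃ T : DTree (Fin n), T.Determines f ∧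
      c = expec (probOne g p) fun x => ((T.path x).card : ℝ)},
      distAlg (bcomp f g) p ≤ a * distAlg g p := by
    intro a ha
    exact DAC.le_mul_csInf hg_ne (hlbf a ha) (fun b hb => key a ha b hb)
  have hg0 : (0:ℝ) ≤ distAlg g p := Real.sInf_nonneg hlbg
  have h2 : distAlg (bcomp f g) p ≤ distAlg g p * sInf {c : ℝ | ∃ T : DTree (Fin n),
      T.Determines f ∧ c = expec (probOne g p) fun x => ((T.path x).card : ℝ)} :=
    DAC.le_mul_csInf hf_ne hg0 (fun a ha => by rw [mul_comm]; exact step1 a ha)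
  rw [mul_comm] at h2
  exact h2
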